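/- Let (T, ε, δ) be a comonad on a category C and let (V, a : T.obj V ⟶ V) be a bifree algebra for the underlying endofunctor of T. Then for every object W of C there exists a unique morphism t : T.obj W ⟶ V satisfying t = δ_W ≫ T.map t ≫ a. (Equivalently: in the co-Kleisli category of T, the morphism a, viewed as an endomorphism of V, has a unique fixed point t : W ⟶ V, namely a unique t with (co-Kleisli composite of t followed by a) = t.) -/
import Mathlib


open CategoryTheory CategoryTheory.Limits

/-- A bifree algebra for an endofunctor `T : C ⥤ C`: an algebra `(V, a)` that is initial
among `T`-algebras, whose structure map `a` is an isomorphism, and such that the coalgebra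
`(V, a⁻¹)` is terminal among `T`-coalgebras. -/
def IsBifreeAlgebra {C : Type*} [Category C] (T : C ⥤ C) (V : C) (a : T.obj V ⟶ V) : Prop :=
  Nonempty (IsInitial (Endofunctor.Algebra.mk V a : Endofunctor.Algebra T)) ∧
  ∃ hiso : IsIso a,
    Nonempty (IsTerminal
      (Endofunctor.Coalgebra.mk V (@inv _ _ _ _ a hiso) : Endofunctor.Coalgebra T))

/-- If `(V, a)` is a bifree algebra for the underlying endofunctor of a comonad `T`, then for
every object `W` there is a unique morphism `t : T.obj W ⟶ V` with
`t = δ_W ≫ T.map t ≫ a`, i.e. `a` has a unique fixed point in the co-Kleisli category. -/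
theorem bifree_unique_fixedPoint
    {C : Type*} [Category C] (T : Comonad C)
    (V : C) (a : (T : C ⥤ C).obj V ⟶ V)
    (h : IsBifreeAlgebra (T : C ⥤ C) V a) (W : C) :
    ∃! t : (T : C ⥤ C).obj W ⟶ V, t = T.δ.app W ≫ (T : C ⥤ C).map t ≫ a := by
  obtain ⟨-, hiso, ⟨hterm⟩⟩ := h
  set X : Endofunctor.Coalgebra (T : C ⥤ C) :=
    Endofunctor.Coalgebra.mk ((T : C ⥤ C).obj W) (T.δ.app W) with hX
  have key : ∀ t : (T : C ⥤ C).obj W ⟶ V,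
      (t = T.δ.app W ≫ (T : C ⥤ C).map t ≫ a) ↔
      (T.δ.app W ≫ (T : C ⥤ C).map t = t ≫ inv a) := by
    intro t
    constructor
    · intro ht
      rw [← cancel_mono a]
      simpa [Category.assoc] using ht.symm
    · intro ht
      rw [← Category.assoc, ht]
      simp
  refine ⟨(hterm.from X).f, ?_, ?_⟩
  · exact (key _).mpr (hterm.from X).h
  · intro t ht
    have : (⟨t, (key t).mp ht⟩ : X ⟶ Endofunctor.Coalgebra.mk V (inv a)) = hterm.from X :=
      hterm.hom_ext _ _
    exact congrArg Endofunctor.Coalgebra.Hom.f this
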